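/- Let G be a simple graph with maximum degree at most 4, let s ≠ t be vertices of G, and let P_1, …, P_p be a family of s-t paths in G with shared edge set F. If s and t lie in different connected components of the spanning subgraph of G with edge set F, then |F| ≥ ⌈(p − deg(s))/2⌉ + ⌈(p − deg(t))/2⌉, where ⌈(p − d)/2⌉ is taken to be 0 whenever p ≤ d. -/

import Mathlib

/-- The set of shared edges of a family of `s`-`t` walks (an edge is shared if it
occurs in two walks with distinct indices). -/
def sharedEdges {V : Type*} {G : SimpleGraph V} {s t : V} {p : ℕ}
    (P : Fin p → G.Walk s t) : Set (Sym2 V) :=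
  {e | ∃ i j, i ≠ j ∧ e ∈ (P i).edges ∧ e ∈ (P j).edges}

/-- The degree of a vertex, as the number of its neighbours. -/
noncomputable def degOf {V : Type*} (G : SimpleGraph V) (v : V) : ℕ :=
  (G.neighborSet v).ncard

/-- `⌈(p - d)/2⌉`, taken to be `0` whenever `p ≤ d`. -/
def ceilHalfSub (p d : ℕ) : ℕ := (p - d + 1) / 2

open Finset in
lemma auxWalk {V : Type*} [DecidableEq V] {H : SimpleGraph V} {a x : V}
    (w : H.Walk a x) :
    ∀ (W : Finset V) (T : Finset (Sym2 V)), a ∈ W →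
      (∀ e ∈ T, ∀ v ∈ e, v ∈ W) →
      (w.support.toFinset \ W).card ≤ (w.edges.toFinset \ T).card := by
  induction w with
  | nil =>
    intro W T ha hT
    simp [ha]
  | @cons u v x h w ih =>
    intro W T haW hT
    by_cases hb : v ∈ W
    · calc ((SimpleGraph.Walk.cons h w).support.toFinset \ W).card
          ≤ (w.support.toFinset \ W).card := by
            apply Finset.card_le_card
            intro z hz
            simp only [SimpleGraph.Walk.support_cons, List.toFinset_cons,
              Finset.mem_sdiff, Finset.mem_insert] at hz ⊢
            rcases hz with ⟨hz1 | hz1, hz2⟩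
            · exact absurd (hz1 ▸ haW) hz2
            · exact ⟨hz1, hz2⟩
        _ ≤ (w.edges.toFinset \ T).card := ih W T hb hT
        _ ≤ ((SimpleGraph.Walk.cons h w).edges.toFinset \ T).card := by
            apply Finset.card_le_card
            intro z hz
            simp only [SimpleGraph.Walk.edges_cons, List.toFinset_cons,
              Finset.mem_sdiff, Finset.mem_insert] at hz ⊢
            exact ⟨Or.inr hz.1, hz.2⟩
    · have heT : s(u, v) ∉ T := fun hmem => hb (hT _ hmem v (by simp))
      have hih := ih (insert v W) (insert s(u, v) T) (Finset.mem_insert_self _ _)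
        (by
          intro e he z hz
          rcases Finset.mem_insert.1 he with rfl | he
          · rcases Sym2.mem_iff.1 hz with rfl | rfl
            · exact Finset.mem_insert_of_mem haW
            · exact Finset.mem_insert_self _ _
          · exact Finset.mem_insert_of_mem (hT e he z hz))
      have h1 : ((SimpleGraph.Walk.cons h w).support.toFinset \ W)
          ⊆ insert v (w.support.toFinset \ insert v W) := by
        intro z hz
        simp only [SimpleGraph.Walk.support_cons, List.toFinset_cons,
          Finset.mem_sdiff, Finset.mem_insert] at hz ⊢
        rcases hz with ⟨hz1 | hz1, hz2⟩
        · exact absurd (hz1 ▸ haW) hz2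
        · by_cases hzv : z = v
          · exact Or.inl hzv
          · exact Or.inr ⟨hz1, by simp [hzv, hz2]⟩
      have h2 : ((SimpleGraph.Walk.cons h w).edges.toFinset \ T)
          = insert s(u, v) (w.edges.toFinset \ T) := by
        ext z
        simp only [SimpleGraph.Walk.edges_cons, List.toFinset_cons,
          Finset.mem_sdiff, Finset.mem_insert]
        constructor
        · rintro ⟨hz1 | hz1, hz2⟩
          · exact Or.inl hz1
          · exact Or.inr ⟨hz1, hz2⟩
        · rintro (rfl | ⟨hz1, hz2⟩)
          · exact ⟨Or.inl rfl, heT⟩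
          · exact ⟨Or.inr hz1, hz2⟩
      have h3 : w.edges.toFinset \ insert s(u, v) T
          = (w.edges.toFinset \ T).erase s(u, v) := by
        ext z
        simp only [Finset.mem_sdiff, Finset.mem_insert, Finset.mem_erase]
        tauto
      calc ((SimpleGraph.Walk.cons h w).support.toFinset \ W).card
          ≤ (insert v (w.support.toFinset \ insert v W)).card :=
            Finset.card_le_card h1
        _ ≤ (w.support.toFinset \ insert v W).card + 1 :=
            Finset.card_insert_le _ _
        _ ≤ (w.edges.toFinset \ insert s(u, v) T).card + 1 := by
            exact Nat.add_le_add_right hih 1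
        _ = ((w.edges.toFinset \ T).erase s(u, v)).card + 1 := by rw [h3]
        _ = (insert s(u, v) (w.edges.toFinset \ T)).card := by
            rw [Finset.card_insert_eq_ite]
            by_cases hmem : s(u, v) ∈ w.edges.toFinset \ T
            · rw [if_pos hmem, Finset.card_erase_of_mem hmem]
              have := Finset.card_pos.2 ⟨_, hmem⟩
              omega
            · rw [if_neg hmem, Finset.erase_eq_of_notMem hmem]
        _ = (((SimpleGraph.Walk.cons h w).edges.toFinset) \ T).card := by rw [h2]

lemma auxUnion {V : Type*} [DecidableEq V] {H : SimpleGraph V} {s : V}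
    (U : Finset V) (hU : ∀ u ∈ U, H.Reachable s u) :
    ∃ (W : Finset V) (T : Finset (Sym2 V)), s ∈ W ∧ U ⊆ W ∧
      (∀ v ∈ W, H.Reachable s v) ∧ (∀ e ∈ T, e ∈ H.edgeSet) ∧
      (∀ e ∈ T, ∀ v ∈ e, v ∈ W) ∧ W.card ≤ T.card + 1 := by
  classical
  induction U using Finset.induction with
  | empty =>
    refine ⟨{s}, ∅, Finset.mem_singleton_self s, by simp, ?_, by simp, by simp, by simp⟩
    intro v hv
    rw [Finset.mem_singleton] at hv
    subst hv; exact SimpleGraph.Reachable.refl v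
  | @insert u U hu ih =>
    obtain ⟨W, T, hsW, hUW, hreach, hTE, hTW, hcard⟩ :=
      ih (fun v hv => hU v (Finset.mem_insert_of_mem hv))
    obtain ⟨w⟩ := hU u (Finset.mem_insert_self _ _)
    refine ⟨W ∪ w.support.toFinset, T ∪ w.edges.toFinset, Finset.mem_union_left _ hsW,
      ?_, ?_, ?_, ?_, ?_⟩
    · intro z hz
      rcases Finset.mem_insert.1 hz with rfl | hz
      · exact Finset.mem_union_right _ (by simp [SimpleGraph.Walk.end_mem_support])
      · exact Finset.mem_union_left _ (hUW hz)
    · intro v hv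
      rcases Finset.mem_union.1 hv with hv | hv
      · exact hreach v hv
      · exact ⟨w.takeUntil v (List.mem_toFinset.1 hv)⟩
    · intro e he
      rcases Finset.mem_union.1 he with he | he
      · exact hTE e he
      · exact w.edges_subset_edgeSet (List.mem_toFinset.1 he)
    · intro e he z hz
      rcases Finset.mem_union.1 he with he | he
      · exact Finset.mem_union_left _ (hTW e he z hz)
      · refine Finset.mem_union_right _ (List.mem_toFinset.2 ?_)
        induction e using Sym2.ind with
        | _ a b =>
          rcases Sym2.mem_iff.1 hz with rfl | rfl
          · exact w.fst_mem_support_of_mem_edges (List.mem_toFinset.1 he)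
          · exact w.snd_mem_support_of_mem_edges (List.mem_toFinset.1 he)
    · have h1 : (W ∪ w.support.toFinset).card
          = (w.support.toFinset \ W).card + W.card := by
        rw [Finset.card_sdiff_add_card, Finset.union_comm]
      have h2 : (T ∪ w.edges.toFinset).card
          = (w.edges.toFinset \ T).card + T.card := by
        rw [Finset.card_sdiff_add_card, Finset.union_comm]
      have h3 := auxWalk w W T hsW hTW
      omega

lemma card_filter_mem_sym2 {V : Type*} [DecidableEq V] (W : Finset V) (e : Sym2 V)
    (hd : ¬ e.IsDiag) (hW : ∀ v ∈ e, v ∈ W) :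
    (W.filter (· ∈ e)).card = 2 := by
  induction e using Sym2.ind with
  | _ a b =>
    have hab : a ≠ b := by simpa using hd
    have : W.filter (· ∈ s(a, b)) = {a, b} := by
      ext v
      simp only [Finset.mem_filter, Sym2.mem_iff, Finset.mem_insert, Finset.mem_singleton]
      constructor
      · tauto
      · rintro (rfl | rfl)
        · exact ⟨hW v (by simp), Or.inl rfl⟩
        · exact ⟨hW v (by simp), Or.inr rfl⟩
    rw [this, Finset.card_pair hab]

lemma incidenceFinite {V : Type*} [DecidableEq V] {G : SimpleGraph V}
    (hfin : ∀ v, (G.neighborSet v).Finite) (u : V) : (G.incidenceSet u).Finite := by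
  haveI : Finite (G.neighborSet u) := (hfin u).to_subtype
  haveI : Finite (G.incidenceSet u) :=
    Finite.of_equiv _ (G.incidenceSetEquivNeighborSet u).symm
  exact Set.toFinite _

lemma degOf_eq_incidence {V : Type*} [DecidableEq V] {G : SimpleGraph V}
    (hfin : ∀ v, (G.neighborSet v).Finite) (u : V) :
    (incidenceFinite hfin u).toFinset.card = degOf G u := by
  haveI := (hfin u).fintype
  haveI : Fintype (G.incidenceSet u) :=
    Fintype.ofEquiv _ (G.incidenceSetEquivNeighborSet u).symm
  rw [Set.Finite.card_toFinset, degOf, Set.ncard_eq_toFinset_card', Set.toFinset_card]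
  exact Fintype.card_congr (G.incidenceSetEquivNeighborSet u)

lemma lemA {V : Type*} {G : SimpleGraph V}
    (hfin : ∀ v, (G.neighborSet v).Finite) (hmax : ∀ v, degOf G v ≤ 4)
    {s t : V} {p : ℕ} (P : Fin p → G.Walk s t)
    (hsep : ¬ (SimpleGraph.fromEdgeSet (sharedEdges P)).Reachable s t) :
    p ≤ degOf G s + 2 * ((sharedEdges P) ∩
      {e | ∀ v ∈ e, (SimpleGraph.fromEdgeSet (sharedEdges P)).Reachable s v}).ncard := by
  classical
  set F := sharedEdges P with hF
  set H := SimpleGraph.fromEdgeSet F with hH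
  have hFG : F ⊆ G.edgeSet := by
    rintro e ⟨i, j, _, hei, _⟩
    exact (P i).edges_subset_edgeSet hei
  have hHF : H.edgeSet ⊆ F := by
    rw [hH, SimpleGraph.edgeSet_fromEdgeSet]
    exact Set.diff_subset
  -- boundary darts
  have hC : ∀ i, ∃ d : G.Dart, d ∈ (P i).darts ∧
      H.Reachable s d.fst ∧ ¬ H.Reachable s d.snd := by
    intro i
    obtain ⟨d, hd, h1, h2⟩ := (P i).exists_boundary_dart
      {v | H.Reachable s v} (SimpleGraph.Reachable.refl s) hsep
    exact ⟨d, hd, h1, h2⟩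
  choose d hd1 hd2 hd3 using hC
  have hedge : ∀ i, (d i).edge ∈ (P i).edges :=
    fun i => List.mem_map_of_mem (f := SimpleGraph.Dart.edge) (hd1 i)
  have hnotF : ∀ i, (d i).edge ∉ F := by
    intro i hFe
    apply hd3 i
    refine (hd2 i).trans (SimpleGraph.Adj.reachable ?_)
    rw [hH, SimpleGraph.fromEdgeSet_adj]
    exact ⟨hFe, (d i).adj.ne⟩
  have hinj : ∀ i j, (d i).edge = (d j).edge → i = j := by
    intro i j hij
    by_contra hne
    exact hnotF i ⟨i, j, hne, hedge i, by rw [hij]; exact hedge j⟩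
  -- connected skeleton
  obtain ⟨W, T, hsW, hUW, hWreach, hTE, hTW, hWT⟩ :=
    auxUnion (U := Finset.univ.image fun i => (d i).fst)
      (by
        intro u hu
        obtain ⟨i, _, rfl⟩ := Finset.mem_image.1 hu
        exact hd2 i)
  have hTF : ∀ e ∈ T, e ∈ F := fun e he => hHF (hTE e he)
  -- per-vertex counting
  have key : ∀ u ∈ W,
      (Finset.univ.filter fun i => (d i).fst = u).card
        + (T.filter (u ∈ ·)).card ≤ degOf G u := by
    intro u _
    set I := (incidenceFinite hfin u).toFinset with hI
    have hTI : T.filter (u ∈ ·) ⊆ I := by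
      intro e he
      rw [Finset.mem_filter] at he
      rw [hI, Set.Finite.mem_toFinset]
      exact ⟨hFG (hTF e he.1), he.2⟩
    have hfib : (Finset.univ.filter fun i => (d i).fst = u).card
        ≤ (I \ T.filter (u ∈ ·)).card := by
      apply Finset.card_le_card_of_injOn (fun i => (d i).edge)
      · intro i hi
        rw [Finset.mem_coe, Finset.mem_filter] at hi
        rw [Finset.mem_coe, Finset.mem_sdiff, hI, Set.Finite.mem_toFinset]
        refine ⟨⟨(d i).edge_mem, ?_⟩, ?_⟩
        · rw [← hi.2]
          exact Sym2.mem_mk_left _ _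
        · intro hmem
          exact hnotF i (hTF _ (Finset.mem_filter.1 hmem).1)
      · exact fun i _ j _ h => hinj i j h
    calc (Finset.univ.filter fun i => (d i).fst = u).card + (T.filter (u ∈ ·)).card
        ≤ (I \ T.filter (u ∈ ·)).card + (T.filter (u ∈ ·)).card :=
          Nat.add_le_add_right hfib _
      _ = I.card := Finset.card_sdiff_add_card_eq_card hTI
      _ = degOf G u := degOf_eq_incidence hfin u
  -- sum over W
  have hsum : p + ∑ u ∈ W, (T.filter (u ∈ ·)).card ≤ ∑ u ∈ W, degOf G u := by
    have hp : p = ∑ u ∈ W, (Finset.univ.filter fun i => (d i).fst = u).card := by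
      rw [← Finset.card_eq_sum_card_fiberwise
        (f := fun i => (d i).fst) (s := Finset.univ) (t := W)
        (fun i _ => hUW (Finset.mem_image.2 ⟨i, Finset.mem_univ i, rfl⟩))]
      simp
    rw [hp, ← Finset.sum_add_distrib]
    exact Finset.sum_le_sum key
  -- handshake
  have hhand : ∑ u ∈ W, (T.filter (u ∈ ·)).card = 2 * T.card := by
    calc ∑ u ∈ W, (T.filter (u ∈ ·)).card
        = ∑ u ∈ W, ∑ e ∈ T, if u ∈ e then 1 else 0 := by
          refine Finset.sum_congr rfl fun u _ => ?_
          rw [Finset.card_eq_sum_ones, Finset.sum_filter]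
      _ = ∑ e ∈ T, ∑ u ∈ W, if u ∈ e then 1 else 0 := Finset.sum_comm
      _ = ∑ e ∈ T, (W.filter (· ∈ e)).card := by
          refine Finset.sum_congr rfl fun e _ => ?_
          rw [Finset.card_eq_sum_ones, Finset.sum_filter]
      _ = ∑ e ∈ T, 2 := by
          apply Finset.sum_congr rfl
          intro e he
          have hdiag : ¬ e.IsDiag := by
            have := hTE e he
            rw [hH, SimpleGraph.edgeSet_fromEdgeSet] at this
            exact this.2
          exact card_filter_mem_sym2 W e hdiag (hTW e he)
      _ = 2 * T.card := by rw [Finset.sum_const, smul_eq_mul, Nat.mul_comm]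
  -- degree sum bound
  have hdegsum : ∑ u ∈ W, degOf G u ≤ degOf G s + 4 * T.card := by
    calc ∑ u ∈ W, degOf G u
        = degOf G s + ∑ u ∈ W.erase s, degOf G u :=
          (Finset.add_sum_erase W (degOf G) hsW).symm
      _ ≤ degOf G s + 4 * (W.erase s).card := by
          refine Nat.add_le_add_left ?_ _
          calc ∑ u ∈ W.erase s, degOf G u ≤ ∑ _u ∈ W.erase s, 4 :=
                Finset.sum_le_sum (fun u _ => hmax u)
            _ = 4 * (W.erase s).card := by rw [Finset.sum_const, smul_eq_mul, Nat.mul_comm]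
      _ ≤ degOf G s + 4 * T.card := by
          have := Finset.card_erase_of_mem hsW
          have := hWT
          omega
  have hmain : p ≤ degOf G s + 2 * T.card := by omega
  -- T is inside the target set
  have hTsub : (↑T : Set (Sym2 V)) ⊆ F ∩ {e | ∀ v ∈ e, H.Reachable s v} := by
    intro e he
    exact ⟨hTF e he, fun v hv => hWreach v (hTW e he v hv)⟩
  have hFfin : F.Finite := by
    apply Set.Finite.subset (Set.finite_iUnion (fun i => (P i).edges.finite_toSet))
    rintro e ⟨i, j, _, hei, _⟩
    exact Set.mem_iUnion.2 ⟨i, hei⟩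
  have hcard : T.card ≤ (F ∩ {e | ∀ v ∈ e, H.Reachable s v}).ncard := by
    rw [← Set.ncard_coe_finset]
    exact Set.ncard_le_ncard hTsub (hFfin.subset Set.inter_subset_left)
  omega


theorem stmt8 {V : Type*} (G : SimpleGraph V)
    (hfin : ∀ v, (G.neighborSet v).Finite) (hmax : ∀ v, degOf G v ≤ 4)
    (s t : V) (hst : s ≠ t)
    (p : ℕ) (P : Fin p → G.Walk s t) (hP : ∀ i, (P i).IsPath)
    (hsep : ¬ (SimpleGraph.fromEdgeSet (sharedEdges P)).Reachable s t) :
    ceilHalfSub p (degOf G s) + ceilHalfSub p (degOf G t)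
      ≤ (sharedEdges P).ncard := by
  classical
  have h1 := lemA hfin hmax P hsep
  set P' : Fin p → G.Walk t s := fun i => (P i).reverse with hP'
  have hFF : sharedEdges P' = sharedEdges P := by
    ext e
    simp [sharedEdges, hP', SimpleGraph.Walk.edges_reverse, List.mem_reverse]
  have hsep' : ¬ (SimpleGraph.fromEdgeSet (sharedEdges P')).Reachable t s := by
    rw [hFF]
    exact fun h => hsep h.symm
  have h2 := lemA hfin hmax P' hsep'
  rw [hFF] at h2
  set H := SimpleGraph.fromEdgeSet (sharedEdges P) with hH
  set Fs := sharedEdges P ∩ {e | ∀ v ∈ e, H.Reachable s v} with hFs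
  set Ft := sharedEdges P ∩ {e | ∀ v ∈ e, H.Reachable t v} with hFt
  have hdisj : Disjoint Fs Ft := by
    rw [Set.disjoint_left]
    rintro e ⟨heF, hs⟩ ⟨_, ht⟩
    induction e using Sym2.ind with
    | _ a b => exact hsep ((hs a (by simp)).trans (ht a (by simp)).symm)
  have hFfin : (sharedEdges P).Finite := by
    apply Set.Finite.subset (Set.finite_iUnion (fun i => (P i).edges.finite_toSet))
    rintro e ⟨i, j, _, hei, _⟩
    exact Set.mem_iUnion.2 ⟨i, hei⟩
  have hle : Fs.ncard + Ft.ncard ≤ (sharedEdges P).ncard := by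
    rw [← Set.ncard_union_eq hdisj (hFfin.subset Set.inter_subset_left)
      (hFfin.subset Set.inter_subset_left)]
    exact Set.ncard_le_ncard
      (Set.union_subset Set.inter_subset_left Set.inter_subset_left) hFfin
  unfold ceilHalfSub
  omega
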